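/- arXiv:2605.21170 — 2 statements merged into one kernel-verified Lean document; each statement's English description precedes it below -/
import Mathlib

section
/- Weak separability does not imply separability for infinite classes: Let τ = {P} with P unary and consider first-order logic. For n ≥ 1 let 𝔄_n be the model with domain ℕ in which P is interpreted by a set of exactly n elements. Then the classes A = {𝔄_n | n odd} and B = {𝔄_n | n even} are weakly separable in first-order logic (each 𝔄_m, 𝔄_n with m ≠ n are separated by the sentence 'there exist exactly m elements satisfying P'), but they are not separable: no single first-order sentence is true in all 𝔄_n with n odd and false in all 𝔄_n with n even. -/
/-- Formulas of FO(Q): first-order logic over a relational vocabulary `R` (with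
arities `ar`) whose quantifiers are the symbols of `QS` (width 1, type 1). -/
inductive Fml (R : Type) (ar : R → ℕ) (QS : Type) : Type where
  | eq : ℕ → ℕ → Fml R ar QS
  | rel : (r : R) → (Fin (ar r) → ℕ) → Fml R ar QS
  | not : Fml R ar QS → Fml R ar QS
  | and : Fml R ar QS → Fml R ar QS → Fml R ar QS
  | qu : QS → ℕ → Fml R ar QS → Fml R ar QS

namespace Fml

variable {R QS : Type} {ar : R → ℕ}

/-- Satisfaction: `Qint` interprets each quantifier symbol as a generalized
quantifier (a class of structures `(D, P)` with `P ⊆ D`). -/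
def Sat (Qint : QS → (D : Type) → Set D → Prop) {A : Type}
    (I : (r : R) → (Fin (ar r) → A) → Prop) :
    (ℕ → A) → Fml R ar QS → Prop
  | f, .eq i j => f i = f j
  | f, .rel r v => I r fun k => f (v k)
  | f, .not φ => ¬ Sat Qint I f φ
  | f, .and φ ψ => Sat Qint I f φ ∧ Sat Qint I f ψ
  | f, .qu q x φ => Qint q A {a | Sat Qint I (Function.update f x a) φ}

/-- Quantifier depth. -/
def depth : Fml R ar QS → ℕ
  | .eq _ _ => 0
  | .rel _ _ => 0
  | .not φ => depth φ
  | .and φ ψ => max (depth φ) (depth ψ)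
  | .qu _ _ φ => depth φ + 1

/-- Formula size. -/
def size : Fml R ar QS → ℕ
  | .eq _ _ => 1
  | .rel _ _ => 1
  | .not φ => size φ + 1
  | .and φ ψ => size φ + size ψ
  | .qu _ _ φ => size φ + 1

/-- Free variables. -/
def freeVars : Fml R ar QS → Finset ℕ
  | .eq i j => {i, j}
  | .rel _ v => Finset.image v Finset.univ
  | .not φ => freeVars φ
  | .and φ ψ => freeVars φ ∪ freeVars ψ
  | .qu _ x φ => freeVars φ \ {x}

/-- Atomic formulas. -/
def Atomic : Fml R ar QS → Prop
  | .eq _ _ => True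
  | .rel _ _ => True
  | _ => False

/-- Quantifier-free formulas (Boolean combinations of atomic formulas). -/
def QFree : Fml R ar QS → Prop
  | .eq _ _ => True
  | .rel _ _ => True
  | .not φ => QFree φ
  | .and φ ψ => QFree φ ∧ QFree ψ
  | .qu _ _ _ => False

end Fml

/-- The standard first-order quantifiers: `true ↦ ∃`, `false ↦ ∀`. -/
def FOQuant : Bool → (D : Type) → Set D → Prop
  | true, _, X => X.Nonempty
  | false, _, X => X = Set.univ


namespace WNS

open Fml

abbrev F := Fml Unit (fun _ => 1) Bool

/-- `v_0 ≠ v_k ∧ ... ∧ v_{j-1} ≠ v_k`. -/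
def diffF : ℕ → ℕ → F
  | 0, _ => .eq 0 0
  | (j+1), k => .and (diffF j k) (.not (.eq j k))

/-- `v_0,...,v_{k-1}` are pairwise distinct and all satisfy `P`. -/
def coreF : ℕ → F
  | 0 => .eq 0 0
  | (k+1) => .and (coreF k) (.and (.rel () (fun _ => k)) (diffF k k))

/-- Existentially quantify variables `0,...,k-1`. -/
def exN : ℕ → F → F
  | 0, φ => φ
  | (k+1), φ => exN k (.qu true k φ)

/-- "There are at least `k` elements satisfying `P`". -/
def atLeast (k : ℕ) : F := exN k (coreF k)

abbrev SatP (P : Set ℕ) (f : ℕ → ℕ) (φ : F) : Prop :=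
  Sat FOQuant (fun _ v => v 0 ∈ P) f φ

lemma sat_diff (P : Set ℕ) (f : ℕ → ℕ) (j k : ℕ) :
    SatP P f (diffF j k) ↔ ∀ i < j, f i ≠ f k := by
  induction j with
  | zero => simp [diffF, Sat]
  | succ j ih =>
      simp only [diffF, Sat, ih]
      constructor
      · rintro ⟨h1, h2⟩ i hi
        rcases Nat.lt_succ_iff_lt_or_eq.mp hi with h | rfl
        · exact h1 i h
        · exact h2
      · intro h
        exact ⟨fun i hi => h i (Nat.lt_succ_of_lt hi), h j (Nat.lt_succ_self j)⟩

lemma sat_core (P : Set ℕ) (f : ℕ → ℕ) (k : ℕ) :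
    SatP P f (coreF k) ↔ (∀ i < k, f i ∈ P) ∧ ∀ i j, i < j → j < k → f i ≠ f j := by
  induction k with
  | zero => simp [coreF, Sat]
  | succ k ih =>
      simp only [coreF, Sat, ih, sat_diff]
      constructor
      · rintro ⟨⟨hmem, hdist⟩, hk, hdiff⟩
        refine ⟨?_, ?_⟩
        · intro i hi
          rcases Nat.lt_succ_iff_lt_or_eq.mp hi with h | rfl
          · exact hmem i h
          · exact hk
        · intro i j hij hj
          rcases Nat.lt_succ_iff_lt_or_eq.mp hj with h | rfl
          · exact hdist i j hij h
          · exact hdiff i hij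
      · rintro ⟨hmem, hdist⟩
        exact ⟨⟨fun i hi => hmem i (Nat.lt_succ_of_lt hi),
                fun i j hij hj => hdist i j hij (Nat.lt_succ_of_lt hj)⟩,
               hmem k (Nat.lt_succ_self k),
               fun i hi => hdist i k hi (Nat.lt_succ_self k)⟩

/-- Patch an assignment with values for variables `< k`. -/
def patch (f : ℕ → ℕ) (k : ℕ) (g : Fin k → ℕ) : ℕ → ℕ :=
  fun i => if h : i < k then g ⟨i, h⟩ else f i

lemma sat_exN (P : Set ℕ) (k : ℕ) : ∀ (φ : F) (f : ℕ → ℕ),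
    SatP P f (exN k φ) ↔ ∃ g : Fin k → ℕ, SatP P (patch f k g) φ := by
  induction k with
  | zero =>
      intro φ f
      have hp : ∀ g : Fin 0 → ℕ, patch f 0 g = f := by
        intro g; funext i; simp [patch]
      constructor
      · intro h; exact ⟨fun i => i.elim0, by rw [hp]; exact h⟩
      · rintro ⟨g, hg⟩; rw [hp] at hg; exact hg
  | succ k ih =>
      intro φ f
      have step : ∀ (g : Fin k → ℕ) (a : ℕ),
          Function.update (patch f k g) k a
            = patch f (k+1) (fun i => if h : (i : ℕ) < k then g ⟨i, h⟩ else a) := by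
        intro g a
        funext i
        by_cases hik : i = k
        · subst hik
          simp [Function.update, patch]
        · by_cases hlt : i < k
          · rw [Function.update_of_ne hik]
            simp [patch, hlt, Nat.lt_succ_of_lt hlt]
          · rw [Function.update_of_ne hik]
            have h1 : ¬ i < k + 1 := by omega
            simp [patch, hlt, h1]
      show SatP P f (exN k (.qu true k φ)) ↔ _
      rw [ih]
      constructor
      · rintro ⟨g, hg⟩
        have hg' : ({a | SatP P (Function.update (patch f k g) k a) φ}).Nonempty := hg
        obtain ⟨a, ha⟩ := hg'
        refine ⟨fun i => if h : (i : ℕ) < k then g ⟨i, h⟩ else a, ?_⟩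
        rw [← step]; exact ha
      · rintro ⟨g', hg'⟩
        refine ⟨fun i => g' i.castSucc, ?_⟩
        show ({a | SatP P (Function.update (patch f k (fun i => g' i.castSucc)) k a) φ}).Nonempty
        refine ⟨g' (Fin.last k), ?_⟩
        show SatP P _ φ
        rw [step]
        have : (fun i : Fin (k+1) => if h : (i : ℕ) < k then g' (Fin.castSucc ⟨i, h⟩) else g' (Fin.last k)) = g' := by
          funext i
          by_cases h : (i : ℕ) < k
          · simp only [dif_pos h]
            exact congrArg g' (Fin.ext rfl)
          · simp only [dif_neg h]
            have hi := i.isLt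
            exact congrArg g' (Fin.ext (by simp only [Fin.val_last]; omega))
        rw [this]
        exact hg'

lemma sat_atLeast (P : Set ℕ) (f : ℕ → ℕ) (k : ℕ) :
    SatP P f (atLeast k) ↔ ∃ g : Fin k → ℕ, Function.Injective g ∧ ∀ i, g i ∈ P := by
  rw [atLeast, sat_exN]
  constructor
  · rintro ⟨g, hg⟩
    rw [sat_core] at hg
    obtain ⟨hmem, hdist⟩ := hg
    refine ⟨g, ?_, ?_⟩
    · intro a b hab
      by_contra hne
      rcases Ne.lt_or_gt hne with h | h
      · exact hdist a b h b.isLt (by simpa [patch, a.isLt, b.isLt] using hab)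
      · exact hdist b a h a.isLt (by simpa [patch, a.isLt, b.isLt] using hab.symm)
    · intro i
      have := hmem i i.isLt
      simpa [patch, i.isLt] using this
  · rintro ⟨g, hinj, hmem⟩
    refine ⟨g, ?_⟩
    rw [sat_core]
    constructor
    · intro i hi; simpa [patch, hi] using hmem ⟨i, hi⟩
    · intro i j hij hj hEq
      have hi : i < k := lt_trans hij hj
      simp only [patch, dif_pos hi, dif_pos hj] at hEq
      have := hinj hEq
      have : i = j := congrArg Fin.val this
      omega

lemma card_iff (P : Set ℕ) (hfin : P.Finite) (k : ℕ) :
    (∃ g : Fin k → ℕ, Function.Injective g ∧ ∀ i, g i ∈ P) ↔ k ≤ P.ncard := by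
  haveI := hfin.fintype
  have hcard : Fintype.card P = P.ncard := by
    rw [Set.ncard_eq_toFinset_card', Set.toFinset_card]
  constructor
  · rintro ⟨g, hg, hmem⟩
    have hg' : Function.Injective (fun i : Fin k => (⟨g i, hmem i⟩ : P)) :=
      fun a b h => hg (congrArg Subtype.val h)
    calc k = Fintype.card (Fin k) := (Fintype.card_fin k).symm
      _ ≤ Fintype.card P := Fintype.card_le_of_injective _ hg'
      _ = P.ncard := hcard
  · intro hk
    have : Fintype.card (Fin k) ≤ Fintype.card P := by
      rw [Fintype.card_fin, hcard]; exact hk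
    obtain ⟨e⟩ := Function.Embedding.nonempty_of_card_le this
    exact ⟨fun i => (e i : ℕ), fun a b h => e.injective (Subtype.ext h), fun i => (e i).2⟩

lemma fv_diff (j k : ℕ) (hj : j ≤ k) : (diffF j k).freeVars ⊆ Finset.range (k+1) := by
  induction j with
  | zero =>
      intro i hi
      simp only [diffF, freeVars, Finset.mem_insert, Finset.mem_singleton] at hi
      rcases hi with rfl | rfl <;> simp
  | succ j ih =>
      intro i hi
      simp only [diffF, freeVars, Finset.mem_union] at hi
      rcases hi with hi | hi
      · exact ih (by omega) hi
      · simp only [Finset.mem_insert, Finset.mem_singleton] at hi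
        rcases hi with rfl | rfl <;> simp <;> omega

lemma fv_core (k : ℕ) : (coreF k).freeVars ⊆ Finset.range (max k 1) := by
  induction k with
  | zero =>
      intro i hi
      simp only [coreF, freeVars, Finset.mem_insert, Finset.mem_singleton] at hi
      rcases hi with rfl | rfl <;> simp
  | succ k ih =>
      intro i hi
      simp only [coreF, freeVars, Finset.mem_union] at hi
      have hmax : max (k+1) 1 = k + 1 := by omega
      rw [hmax, Finset.mem_range]
      rcases hi with hi | hi | hi
      · have := ih hi; rw [Finset.mem_range] at this; omega
      · simp only [Finset.mem_image, Finset.mem_univ] at hi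
        obtain ⟨_, _, rfl⟩ := hi; omega
      · have := fv_diff k k le_rfl hi; rw [Finset.mem_range] at this; omega

lemma fv_exN (k : ℕ) : ∀ φ : F, (exN k φ).freeVars ⊆ φ.freeVars \ Finset.range k := by
  induction k with
  | zero => intro φ; simp [exN]
  | succ k ih =>
      intro φ i hi
      have := ih (.qu true k φ) hi
      simp only [freeVars, Finset.mem_sdiff, Finset.mem_singleton, Finset.mem_range] at this ⊢
      obtain ⟨⟨h1, h2⟩, h3⟩ := this
      exact ⟨h1, by omega⟩

lemma fv_atLeast (k : ℕ) (hk : 1 ≤ k) : (atLeast k).freeVars = ∅ := by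
  rw [Finset.eq_empty_iff_forall_notMem]
  intro i hi
  have h1 := fv_exN k (coreF k) hi
  rw [Finset.mem_sdiff] at h1
  have h2 := fv_core k h1.1
  rw [Finset.mem_range] at h2
  have := h1.2
  rw [Finset.mem_range] at this
  omega

/-- The "forth" step of the Ehrenfeucht–Fraïssé argument. -/
lemma forth (P P' : Set ℕ) (hP' : P'.Finite)
    (S : Finset ℕ) (x : ℕ) (f f' : ℕ → ℕ)
    (h1 : ∀ i ∈ S, ∀ j ∈ S, (f i = f j ↔ f' i = f' j))
    (h2 : ∀ i ∈ S, (f i ∈ P ↔ f' i ∈ P'))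
    (hc' : S.card + 1 ≤ P'.ncard) (a : ℕ) :
    ∃ a', (∀ i ∈ insert x S, ∀ j ∈ insert x S,
            (Function.update f x a i = Function.update f x a j ↔
             Function.update f' x a' i = Function.update f' x a' j)) ∧
          (∀ i ∈ insert x S, (Function.update f x a i ∈ P ↔ Function.update f' x a' i ∈ P')) := by
  classical
  set T : Finset ℕ := S.erase x with hT
  have key : ∃ a', (∀ j ∈ T, (f j = a ↔ f' j = a')) ∧ (a ∈ P ↔ a' ∈ P') := by
    by_cases hcase : ∃ i ∈ T, f i = a
    · obtain ⟨i₀, hi₀, hfi₀⟩ := hcase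
      have hi₀S : i₀ ∈ S := Finset.mem_of_mem_erase hi₀
      refine ⟨f' i₀, ?_, ?_⟩
      · intro j hj
        have hjS : j ∈ S := Finset.mem_of_mem_erase hj
        rw [← hfi₀]
        constructor
        · intro h; exact ((h1 j hjS i₀ hi₀S).mp h)
        · intro h; exact ((h1 j hjS i₀ hi₀S).mpr h)
      · rw [← hfi₀]; exact h2 i₀ hi₀S
    · push_neg at hcase
      by_cases ha : a ∈ P
      · -- pick a' ∈ P' not in the image of f' on T
        have hnotsub : ¬ hP'.toFinset ⊆ T.image f' := by
          intro hsub
          have h3 : hP'.toFinset.card ≤ (T.image f').card := Finset.card_le_card hsub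
          have h4 : (T.image f').card ≤ T.card := Finset.card_image_le
          have h5 : T.card ≤ S.card := Finset.card_erase_le.trans le_rfl
          have h6 : hP'.toFinset.card = P'.ncard :=
            (Set.ncard_eq_toFinset_card P' hP').symm
          omega
        obtain ⟨a', ha'P, ha'img⟩ := Finset.not_subset.mp hnotsub
        rw [Set.Finite.mem_toFinset] at ha'P
        refine ⟨a', ?_, iff_of_true ha ha'P⟩
        intro j hj
        constructor
        · intro h; exact absurd h (hcase j hj)
        · intro h
          exact absurd (Finset.mem_image.mpr ⟨j, hj, h⟩) ha'img
      · -- pick a' outside P' and outside the image of f' on T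
        obtain ⟨a', ha'⟩ := Infinite.exists_notMem_finset (hP'.toFinset ∪ T.image f')
        rw [Finset.mem_union, not_or] at ha'
        obtain ⟨ha'P, ha'img⟩ := ha'
        rw [Set.Finite.mem_toFinset] at ha'P
        refine ⟨a', ?_, iff_of_false ha ha'P⟩
        intro j hj
        constructor
        · intro h; exact absurd h (hcase j hj)
        · intro h
          exact absurd (Finset.mem_image.mpr ⟨j, hj, h⟩) ha'img
  obtain ⟨a', hA, hB⟩ := key
  refine ⟨a', ?_, ?_⟩
  · intro i hi j hj
    by_cases hix : i = x
    · by_cases hjx : j = x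
      · subst hix; subst hjx; simp
      · subst hix
        have hjS : j ∈ S := by
          rcases Finset.mem_insert.mp hj with h | h
          · exact absurd h hjx
          · exact h
        have hjT : j ∈ T := Finset.mem_erase.mpr ⟨hjx, hjS⟩
        simp only [Function.update_self, Function.update_of_ne hjx]
        exact ⟨fun h => ((hA j hjT).mp h.symm).symm, fun h => ((hA j hjT).mpr h.symm).symm⟩
    · have hiS : i ∈ S := by
        rcases Finset.mem_insert.mp hi with h | h
        · exact absurd h hix
        · exact h
      have hiT : i ∈ T := Finset.mem_erase.mpr ⟨hix, hiS⟩
      by_cases hjx : j = x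
      · subst hjx
        simp only [Function.update_self, Function.update_of_ne hix]
        exact hA i hiT
      · have hjS : j ∈ S := by
          rcases Finset.mem_insert.mp hj with h | h
          · exact absurd h hjx
          · exact h
        simp only [Function.update_of_ne hix, Function.update_of_ne hjx]
        exact h1 i hiS j hjS
  · intro i hi
    by_cases hix : i = x
    · subst hix
      simp only [Function.update_self]
      exact hB
    · have hiS : i ∈ S := by
        rcases Finset.mem_insert.mp hi with h | h
        · exact absurd h hix
        · exact h
      simp only [Function.update_of_ne hix]
      exact h2 i hiS

/-- The Ehrenfeucht–Fraïssé transfer lemma. -/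
lemma EF (P P' : Set ℕ) (hP : P.Finite) (hP' : P'.Finite) :
    ∀ (φ : F) (S : Finset ℕ) (f f' : ℕ → ℕ),
    φ.freeVars ⊆ S →
    (∀ i ∈ S, ∀ j ∈ S, (f i = f j ↔ f' i = f' j)) →
    (∀ i ∈ S, (f i ∈ P ↔ f' i ∈ P')) →
    S.card + φ.depth ≤ P.ncard → S.card + φ.depth ≤ P'.ncard →
    (SatP P f φ ↔ SatP P' f' φ) := by
  intro φ
  induction φ with
  | eq i j =>
      intro S f f' hfv h1 h2 hc hc'
      have hi : i ∈ S := hfv (by simp [freeVars])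
      have hj : j ∈ S := hfv (by simp [freeVars])
      show f i = f j ↔ f' i = f' j
      exact h1 i hi j hj
  | rel r v =>
      intro S f f' hfv h1 h2 hc hc'
      have hv : v 0 ∈ S := hfv (by
        simp only [freeVars, Finset.mem_image]
        exact ⟨0, Finset.mem_univ 0, rfl⟩)
      show f (v 0) ∈ P ↔ f' (v 0) ∈ P'
      exact h2 (v 0) hv
  | not ψ ih =>
      intro S f f' hfv h1 h2 hc hc'
      show ¬ SatP P f ψ ↔ ¬ SatP P' f' ψ
      rw [ih S f f' hfv h1 h2 hc hc']
  | and ψ χ ih1 ih2 =>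
      intro S f f' hfv h1 h2 hc hc'
      have hfvψ : ψ.freeVars ⊆ S := fun i hi => hfv (Finset.mem_union_left _ hi)
      have hfvχ : χ.freeVars ⊆ S := fun i hi => hfv (Finset.mem_union_right _ hi)
      have hdψ : S.card + ψ.depth ≤ P.ncard := by
        have : ψ.depth ≤ max ψ.depth χ.depth := le_max_left _ _
        simp only [depth] at hc; omega
      have hdψ' : S.card + ψ.depth ≤ P'.ncard := by
        have : ψ.depth ≤ max ψ.depth χ.depth := le_max_left _ _
        simp only [depth] at hc'; omega
      have hdχ : S.card + χ.depth ≤ P.ncard := by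
        have : χ.depth ≤ max ψ.depth χ.depth := le_max_right _ _
        simp only [depth] at hc; omega
      have hdχ' : S.card + χ.depth ≤ P'.ncard := by
        have : χ.depth ≤ max ψ.depth χ.depth := le_max_right _ _
        simp only [depth] at hc'; omega
      show SatP P f ψ ∧ SatP P f χ ↔ SatP P' f' ψ ∧ SatP P' f' χ
      rw [ih1 S f f' hfvψ h1 h2 hdψ hdψ', ih2 S f f' hfvχ h1 h2 hdχ hdχ']
  | qu q x ψ ih =>
      intro S f f' hfv h1 h2 hc hc'
      have hfvψ : ψ.freeVars ⊆ insert x S := by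
        intro i hi
        by_cases hix : i = x
        · subst hix; exact Finset.mem_insert_self _ _
        · refine Finset.mem_insert_of_mem (hfv ?_)
          simp only [freeVars, Finset.mem_sdiff, Finset.mem_singleton]
          exact ⟨hi, hix⟩
      have hcard : (insert x S).card ≤ S.card + 1 := Finset.card_insert_le _ _
      simp only [depth] at hc hc'
      have hcψ : (insert x S).card + ψ.depth ≤ P.ncard := by omega
      have hcψ' : (insert x S).card + ψ.depth ≤ P'.ncard := by omega
      have key : ∀ a, ∃ a', (SatP P (Function.update f x a) ψ ↔
          SatP P' (Function.update f' x a') ψ) := by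
        intro a
        obtain ⟨a', hA, hB⟩ := forth P P' hP' S x f f' h1 h2 (by omega) a
        exact ⟨a', ih (insert x S) _ _ hfvψ hA hB hcψ hcψ'⟩
      have key' : ∀ a', ∃ a, (SatP P (Function.update f x a) ψ ↔
          SatP P' (Function.update f' x a') ψ) := by
        intro a'
        obtain ⟨a, hA, hB⟩ := forth P' P hP S x f' f
          (fun i hi j hj => (h1 i hi j hj).symm)
          (fun i hi => (h2 i hi).symm) (by omega) a'
        refine ⟨a, ?_⟩
        have := ih (insert x S) (Function.update f x a) (Function.update f' x a') hfvψ
          (fun i hi j hj => (hA i hi j hj).symm)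
          (fun i hi => (hB i hi).symm) hcψ hcψ'
        exact this
      cases q with
      | true =>
          show ({a | SatP P (Function.update f x a) ψ}).Nonempty ↔
               ({a | SatP P' (Function.update f' x a) ψ}).Nonempty
          constructor
          · rintro ⟨a, ha⟩
            obtain ⟨a', hiff⟩ := key a
            exact ⟨a', hiff.mp ha⟩
          · rintro ⟨a', ha'⟩
            obtain ⟨a, hiff⟩ := key' a'
            exact ⟨a, hiff.mpr ha'⟩
      | false =>
          show {a | SatP P (Function.update f x a) ψ} = Set.univ ↔
               {a | SatP P' (Function.update f' x a) ψ} = Set.univ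
          rw [Set.eq_univ_iff_forall, Set.eq_univ_iff_forall]
          constructor
          · intro h a'
            obtain ⟨a, hiff⟩ := key' a'
            exact hiff.mp (h a)
          · intro h a
            obtain ⟨a', hiff⟩ := key a
            exact hiff.mpr (h a')

end WNS

open Fml in
/-- Weak separability does not imply separability for infinite classes: over the
vocabulary `{P}` (one unary relation) with models `𝔄_n` on domain `ℕ` where `P`
has exactly `n` elements, the odd-indexed and even-indexed classes are weakly
separable in first-order logic, but no single first-order sentence separates them. -/
theorem weak_not_strong_infinite (I : ℕ → Set ℕ)
    (hI : ∀ n, 1 ≤ n → (I n).Finite ∧ (I n).ncard = n) :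
    (∀ m n, 1 ≤ m → 1 ≤ n → Odd m → Even n →
      ∃ φ : Fml Unit (fun _ => 1) Bool, freeVars φ = ∅ ∧
        Sat FOQuant (fun _ v => v 0 ∈ I m) (fun _ => 0) φ ∧
        ¬ Sat FOQuant (fun _ v => v 0 ∈ I n) (fun _ => 0) φ) ∧
    ¬ ∃ φ : Fml Unit (fun _ => 1) Bool, freeVars φ = ∅ ∧
        (∀ n, 1 ≤ n → Odd n → Sat FOQuant (fun _ v => v 0 ∈ I n) (fun _ => 0) φ) ∧
        (∀ n, 1 ≤ n → Even n → ¬ Sat FOQuant (fun _ v => v 0 ∈ I n) (fun _ => 0) φ) := by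
  classical
  constructor
  · -- weak separability
    intro m n hm1 hn1 hOdd hEven
    obtain ⟨hmfin, hmcard⟩ := hI m hm1
    obtain ⟨hnfin, hncard⟩ := hI n hn1
    have hmn : m ≠ n := by
      rintro rfl
      obtain ⟨k, hk⟩ := hOdd
      obtain ⟨l, hl⟩ := hEven
      omega
    by_cases hlt : n < m
    · refine ⟨WNS.atLeast (n+1), WNS.fv_atLeast (n+1) (by omega), ?_, ?_⟩
      · rw [show (Fml.Sat FOQuant (fun _ v => v 0 ∈ I m) (fun _ => 0) (WNS.atLeast (n+1))) =
            WNS.SatP (I m) (fun _ => 0) (WNS.atLeast (n+1)) from rfl,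
            WNS.sat_atLeast, WNS.card_iff _ hmfin, hmcard]
        omega
      · rw [show (Fml.Sat FOQuant (fun _ v => v 0 ∈ I n) (fun _ => 0) (WNS.atLeast (n+1))) =
            WNS.SatP (I n) (fun _ => 0) (WNS.atLeast (n+1)) from rfl,
            WNS.sat_atLeast, WNS.card_iff _ hnfin, hncard]
        omega
    · have hlt' : m < n := by omega
      refine ⟨.not (WNS.atLeast (m+1)), ?_, ?_, ?_⟩
      · show (WNS.atLeast (m+1)).freeVars = ∅
        exact WNS.fv_atLeast (m+1) (by omega)
      · show ¬ WNS.SatP (I m) (fun _ => 0) (WNS.atLeast (m+1))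
        rw [WNS.sat_atLeast, WNS.card_iff _ hmfin, hmcard]
        omega
      · show ¬ ¬ WNS.SatP (I n) (fun _ => 0) (WNS.atLeast (m+1))
        rw [WNS.sat_atLeast, WNS.card_iff _ hnfin, hncard]
        omega
  · -- no single sentence separates
    rintro ⟨φ, hfv, hodd, heven⟩
    set d := φ.depth with hd
    set n := 2 * d + 1 with hn
    have hn1 : 1 ≤ n := by omega
    have hn1' : 1 ≤ n + 1 := by omega
    obtain ⟨hfin, hcard⟩ := hI n hn1
    obtain ⟨hfin', hcard'⟩ := hI (n+1) hn1'
    have hEF := WNS.EF (I n) (I (n+1)) hfin hfin' φ ∅ (fun _ => 0) (fun _ => 0)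
      (by rw [hfv]) (by simp) (by simp)
      (by rw [hcard]; simp; omega) (by rw [hcard']; simp; omega)
    have hOddn : Odd n := ⟨d, by omega⟩
    have hEvenn : Even (n+1) := ⟨d+1, by omega⟩
    exact heven (n+1) hn1' hEvenn (hEF.mp (hodd n hn1 hOddn))
end

section
/- Quantifier move soundness: With notation as above, suppose additionally that (A, P(𝔄,f)) ∈ Q for all (𝔄,f) ∈ A and (B, P(𝔅,g)) ∉ Q for all (𝔅,g) ∈ B, where Q is a generalized quantifier of width 1 and type 1, and suppose a formula φ of size ≤ s−1 separates C⁺ from C⁻. Then the formula Qx φ separates A from B and has size ≤ s. -/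
/-- A `τ`-pair: a relational model together with an assignment over it. -/
structure TauPair (R : Type) (ar : R → ℕ) : Type 1 where
  Dom : Type
  interp : (r : R) → (Fin (ar r) → Dom) → Prop
  assign : ℕ → Dom

namespace TauPair

variable {R QS : Type} {ar : R → ℕ}

/-- Satisfaction in a `τ`-pair. -/
def SatP (Qint : QS → (D : Type) → Set D → Prop) (p : TauPair R ar)
    (φ : Fml R ar QS) : Prop :=
  Fml.Sat Qint p.interp p.assign φ

/-- `φ` separates the class `𝒜` from the class `ℬ`: `φ` is true in every pair
of `𝒜` and false in every pair of `ℬ`. -/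
def Separates (Qint : QS → (D : Type) → Set D → Prop) (φ : Fml R ar QS)
    (𝒜 ℬ : Set (TauPair R ar)) : Prop :=
  (∀ p ∈ 𝒜, SatP Qint p φ) ∧ ∀ p ∈ ℬ, ¬ SatP Qint p φ

/-- The pair obtained by updating the assignment at variable `x` with value `v`. -/
def upd (p : TauPair R ar) (x : ℕ) (v : p.Dom) : TauPair R ar :=
  ⟨p.Dom, p.interp, Function.update p.assign x v⟩

/-- `C⁺`: pairs of `𝒮` extended at `x` by a point of the chosen set. -/
def Cplus (P : (p : TauPair R ar) → Set p.Dom) (x : ℕ)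
    (𝒮 : Set (TauPair R ar)) : Set (TauPair R ar) :=
  {q | ∃ p ∈ 𝒮, ∃ v ∈ P p, q = p.upd x v}

/-- `C⁻`: pairs of `𝒮` extended at `x` by a point outside the chosen set. -/
def Cminus (P : (p : TauPair R ar) → Set p.Dom) (x : ℕ)
    (𝒮 : Set (TauPair R ar)) : Set (TauPair R ar) :=
  {q | ∃ p ∈ 𝒮, ∃ v : p.Dom, v ∉ P p ∧ q = p.upd x v}

end TauPair

theorem Fml.one_le_size {R QS : Type} {ar : R → ℕ} (φ : Fml R ar QS) : 1 ≤ φ.size := by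
  induction φ with
  | eq => simp [Fml.size]
  | rel => simp [Fml.size]
  | not _ ih => simp [Fml.size]
  | and _ _ ih1 ih2 => simp [Fml.size]; omega
  | qu => simp [Fml.size]

open Fml TauPair in
/-- Quantifier move soundness: if `(A, P(𝔄,f)) ∈ Q` on `𝒜`, `(B, P(𝔅,g)) ∉ Q`
on `ℬ`, and a formula `φ` of size ≤ s−1 separates `C⁺` from `C⁻`, then `Qx φ`
separates `𝒜` from `ℬ` and has size ≤ s. -/
theorem quantifier_move_soundness {R QS : Type} {ar : R → ℕ}
    (Qint : QS → (D : Type) → Set D → Prop) (q : QS)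
    (𝒜 ℬ : Set (TauPair R ar)) (P : (p : TauPair R ar) → Set p.Dom)
    (x : ℕ) (φ : Fml R ar QS) (s : ℕ)
    (hQA : ∀ p ∈ 𝒜, Qint q p.Dom (P p))
    (hQB : ∀ p ∈ ℬ, ¬ Qint q p.Dom (P p))
    (hsep : Separates Qint φ (Cplus P x (𝒜 ∪ ℬ)) (Cminus P x (𝒜 ∪ ℬ)))
    (hsize : size φ ≤ s - 1) :
    Separates Qint (Fml.qu q x φ) 𝒜 ℬ ∧ size (Fml.qu q x φ) ≤ s := by
  have key : ∀ p ∈ 𝒜 ∪ ℬ, {a | Fml.Sat Qint p.interp (Function.update p.assign x a) φ} = P p := by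
    intro p hp
    ext v
    constructor
    · intro hv
      by_contra hvP
      exact hsep.2 (p.upd x v) ⟨p, hp, v, hvP, rfl⟩ hv
    · intro hv
      exact hsep.1 (p.upd x v) ⟨p, hp, v, hv, rfl⟩
  have h1 := Fml.one_le_size φ
  refine ⟨⟨?_, ?_⟩, by simp [Fml.size]; omega⟩
  · intro p hp
    show Qint q p.Dom _
    rw [key p (Or.inl hp)]
    exact hQA p hp
  · intro p hp hsat
    have : Qint q p.Dom {a | Fml.Sat Qint p.interp (Function.update p.assign x a) φ} := hsat
    rw [key p (Or.inr hp)] at this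
    exact hQB p hp this
end
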